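/- A permutation of length n is sortable on a single stack if and only if it avoids the pattern 231. -/

import Mathlib

/-- State of a single-stack switchyard: output so far, the stack, remaining input. -/
structure SState where
  output : List ℕ
  stack : List ℕ
  input : List ℕ

/-- One step of single-stack sorting: push the next input element onto the stack,
or pop the top of the stack to the output. -/
inductive StackStep : SState → SState → Prop
  | push (o s i : List ℕ) (x : ℕ) : StackStep ⟨o, s, x :: i⟩ ⟨o, x :: s, i⟩
  | pop (o s i : List ℕ) (x : ℕ) : StackStep ⟨o, x :: s, i⟩ ⟨o ++ [x], s, i⟩

/-- A permutation (as a list) is sortable on a single stack if some sequence of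
operations outputs `1, 2, …, n`. -/
def StackSortable (l : List ℕ) : Prop :=
  Relation.ReflTransGen StackStep ⟨[], [], l⟩ ⟨List.range' 1 l.length, [], []⟩

/-- `l` contains the pattern 231: indices `i < j < k` with `l k < l i < l j`. -/
def Contains231L (l : List ℕ) : Prop :=
  ∃ i j k : Fin l.length, i < j ∧ j < k ∧ l.get k < l.get i ∧ l.get i < l.get j

open List

/-- Abstract sorting predicate: from stack `s` and input `i`, with `m` the next
value to be output, the machine can finish successfully. -/
inductive CanSort : ℕ → List ℕ → List ℕ → Prop
  | done (m : ℕ) : CanSort m [] []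
  | pop {m : ℕ} {s i : List ℕ} : CanSort (m + 1) s i → CanSort m (m :: s) i
  | push {m x : ℕ} {s i : List ℕ} : CanSort m (x :: s) i → CanSort m s (x :: i)

lemma run_prefix {fo : List ℕ} : ∀ {st : SState},
    Relation.ReflTransGen StackStep st ⟨fo, [], []⟩ →
    st.output <+: fo ∧ fo.length = st.output.length + st.stack.length + st.input.length := by
  intro st h
  induction h using Relation.ReflTransGen.head_induction_on with
  | refl => exact ⟨List.prefix_refl _, by simp⟩
  | head step _ ih =>
    cases step with
    | push o s i x =>
      obtain ⟨h1, h2⟩ := ih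
      exact ⟨h1, by simp at h2 ⊢; omega⟩
    | pop o s i x =>
      obtain ⟨h1, h2⟩ := ih
      refine ⟨((o.prefix_append [x]).trans h1), by simp at h2 ⊢; omega⟩

lemma run_to_canSort : ∀ (N : ℕ) (m : ℕ) (o s i : List ℕ),
    2 * i.length + s.length ≤ N →
    Relation.ReflTransGen StackStep ⟨o, s, i⟩
      ⟨o ++ List.range' m (s.length + i.length), [], []⟩ →
    CanSort m s i := by
  intro N
  induction N with
  | zero =>
    intro m o s i hle _
    have hs : s = [] := List.length_eq_zero_iff.mp (by omega)
    have hi : i = [] := List.length_eq_zero_iff.mp (by omega)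
    subst hs; subst hi
    exact CanSort.done m
  | succ N ih =>
    intro m o s i hle h
    rcases Relation.ReflTransGen.cases_head h with heq | ⟨c, hstep, hrest⟩
    · have hs : s = [] := congrArg SState.stack heq
      have hi : i = [] := congrArg SState.input heq
      subst hs; subst hi
      exact CanSort.done m
    · cases hstep with
      | push o s i x =>
        have hlen : s.length + (x :: i).length = (x :: s).length + i.length := by
          simp; omega
        rw [hlen] at hrest
        exact CanSort.push (ih m o (x :: s) i (by simp at hle ⊢; omega) hrest)
      | pop o s i x =>
        have hL : (x :: s).length + i.length = (s.length + i.length) + 1 := by simp; omega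
        rw [hL, List.range'_succ] at hrest
        have hpre := (run_prefix hrest).1
        have hx : x = m := by
          have : o ++ [x] <+: o ++ (m :: List.range' (m + 1) (s.length + i.length)) := hpre
          rw [List.prefix_append_right_inj] at this
          exact (List.cons_prefix_cons.mp this).1
        rw [hx] at hrest ⊢
        have hrw : o ++ (m :: List.range' (m + 1) (s.length + i.length))
            = (o ++ [m]) ++ List.range' (m + 1) (s.length + i.length) := by simp
        rw [hrw] at hrest
        exact CanSort.pop (ih (m + 1) (o ++ [m]) s i (by simp at hle ⊢; omega) hrest)

lemma canSort_bounds : ∀ {m : ℕ} {s i : List ℕ}, CanSort m s i →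
    List.Pairwise (· < ·) s ∧ (∀ x ∈ s, m ≤ x) ∧ (∀ x ∈ i, m ≤ x) := by
  intro m s i h
  induction h with
  | done => simp
  | @pop m s i _ ih =>
    obtain ⟨h1, h2, h3⟩ := ih
    refine ⟨List.pairwise_cons.mpr ⟨fun b hb => by have := h2 b hb; omega, h1⟩, ?_, ?_⟩
    · intro x hx
      rcases List.mem_cons.mp hx with rfl | hx'
      · exact le_refl _
      · have := h2 x hx'; omega
    · intro x hx; have := h3 x hx; omega
  | @push m x s i _ ih =>
    obtain ⟨h1, h2, h3⟩ := ih
    refine ⟨(List.pairwise_cons.mp h1).2, fun y hy => h2 y (List.mem_cons_of_mem _ hy), ?_⟩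
    intro y hy
    rcases List.mem_cons.mp hy with rfl | hy'
    · exact h2 y List.mem_cons_self
    · exact h3 y hy'

lemma not_canSort_of_bad : ∀ {m : ℕ} {s i : List ℕ}, CanSort m s i →
    ∀ a b c : ℕ, c < a → a < b →
    ([a, b, c] <+ i ∨ (a ∈ s ∧ [b, c] <+ i)) → False := by
  intro m s i h
  induction h with
  | done =>
    intro a b c _ _ hbad
    rcases hbad with h | ⟨_, h⟩ <;> simp at h
  | @pop m s i hc ih =>
    intro a b c h1 h2 hbad
    rcases hbad with h | ⟨ha, h⟩
    · exact ih a b c h1 h2 (Or.inl h)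
    · rcases List.mem_cons.mp ha with rfl | ha'
      · have hcmem : c ∈ i := h.subset (by simp)
        have := (canSort_bounds hc).2.2 c hcmem
        omega
      · exact ih a b c h1 h2 (Or.inr ⟨ha', h⟩)
  | @push m x s i hc ih =>
    intro a b c h1 h2 hbad
    rcases hbad with h | ⟨ha, h⟩
    · cases h with
      | cons _ h' => exact ih a b c h1 h2 (Or.inl h')
      | cons_cons _ h' => exact ih x b c h1 h2 (Or.inr ⟨List.mem_cons_self, h'⟩)
    · cases h with
      | cons _ h' => exact ih a b c h1 h2 (Or.inr ⟨List.mem_cons_of_mem _ ha, h'⟩)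
      | cons_cons _ h' =>
        have hs := (canSort_bounds hc).1
        have := (List.pairwise_cons.mp hs).1 a ha
        omega

lemma sublist_three {l : List ℕ} {i j k : ℕ} (hij : i < j) (hjk : j < k)
    (hk : k < l.length) (hi : i < l.length) (hj : j < l.length) :
    [l[i], l[j], l[k]] <+ l := by
  have h1 : [l[k]] <+ l.drop k := by
    rw [← List.getElem_cons_drop hk]
    exact (List.nil_sublist _).cons_cons _
  have hkj : l.drop k <+ l.drop (j + 1) := by
    have : l.drop k = List.drop (k - (j + 1)) (l.drop (j + 1)) := by
      rw [List.drop_drop]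
      congr 1
      omega
    rw [this]
    exact List.drop_sublist _ _
  have h2 : [l[j], l[k]] <+ l.drop j := by
    rw [← List.getElem_cons_drop hj]
    exact (h1.trans hkj).cons_cons _
  have hji : l.drop j <+ l.drop (i + 1) := by
    have : l.drop j = List.drop (j - (i + 1)) (l.drop (i + 1)) := by
      rw [List.drop_drop]
      congr 1
      omega
    rw [this]
    exact List.drop_sublist _ _
  have h3 : [l[i], l[j], l[k]] <+ l.drop i := by
    rw [← List.getElem_cons_drop hi]
    exact (h2.trans hji).cons_cons _
  exact h3.trans (List.drop_sublist _ _)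

lemma run_frame (o₀ s₀ i₀ : List ℕ) {st st' : SState}
    (h : Relation.ReflTransGen StackStep st st') :
    Relation.ReflTransGen StackStep
      ⟨o₀ ++ st.output, st.stack ++ s₀, st.input ++ i₀⟩
      ⟨o₀ ++ st'.output, st'.stack ++ s₀, st'.input ++ i₀⟩ := by
  induction h with
  | refl => exact Relation.ReflTransGen.refl
  | tail _ hstep ih =>
    refine ih.tail ?_
    cases hstep with
    | push o s i x => exact StackStep.push (o₀ ++ o) (s ++ s₀) (i ++ i₀) x
    | pop o s i x =>
      have := StackStep.pop (o₀ ++ o) (s ++ s₀) (i ++ i₀) x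
      simpa [List.append_assoc] using this

lemma avoid_of_append_left {A rest : List ℕ} (h : ¬ Contains231L (A ++ rest)) :
    ¬ Contains231L A := by
  intro ⟨i, j, k, hij, hjk, h1, h2⟩
  apply h
  have hlen : ∀ p : Fin A.length, (p : ℕ) < (A ++ rest).length := by
    intro p; simp; omega
  have hg : ∀ p : Fin A.length, (A ++ rest).get ⟨p, hlen p⟩ = A.get p := fun p => by
    simp [List.getElem_append_left p.isLt]
  exact ⟨⟨i, hlen i⟩, ⟨j, hlen j⟩, ⟨k, hlen k⟩, hij, hjk,
    by rw [hg, hg]; exact h1, by rw [hg, hg]; exact h2⟩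

lemma avoid_of_append_right {A B : List ℕ} {v : ℕ} (h : ¬ Contains231L (A ++ v :: B)) :
    ¬ Contains231L B := by
  intro ⟨i, j, k, hij, hjk, h1, h2⟩
  apply h
  have hget : ∀ p : Fin B.length,
      ∃ hp : A.length + 1 + (p : ℕ) < (A ++ v :: B).length,
        (A ++ v :: B)[A.length + 1 + (p : ℕ)] = B[(p : ℕ)] := by
    intro p
    have hp : A.length + 1 + (p : ℕ) < (A ++ v :: B).length := by
      simp; omega
    refine ⟨hp, ?_⟩
    rw [List.getElem_append_right (by omega)]
    have : A.length + 1 + (p : ℕ) - A.length = (p : ℕ) + 1 := by omega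
    simp only [this]
    simp
  obtain ⟨hpi, hgi⟩ := hget i
  obtain ⟨hpj, hgj⟩ := hget j
  obtain ⟨hpk, hgk⟩ := hget k
  refine ⟨⟨A.length + 1 + i, hpi⟩, ⟨A.length + 1 + j, hpj⟩, ⟨A.length + 1 + k, hpk⟩,
    ?_, ?_, ?_, ?_⟩
  · have := hij; rw [Fin.lt_def] at this; simp only [Fin.mk_lt_mk]; omega
  · have := hjk; rw [Fin.lt_def] at this; simp only [Fin.mk_lt_mk]; omega
  · simp only [List.get_eq_getElem] at h1 ⊢; rw [hgk, hgi]; exact h1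
  · simp only [List.get_eq_getElem] at h2 ⊢; rw [hgi, hgj]; exact h2

lemma build : ∀ (k m : ℕ) (l : List ℕ), l.Perm (List.range' m k) → ¬ Contains231L l →
    Relation.ReflTransGen StackStep ⟨[], [], l⟩ ⟨List.range' m k, [], []⟩ := by
  intro k
  induction k using Nat.strong_induction_on with
  | _ k ih =>
    intro m l hperm havoid
    match k with
    | 0 =>
      have : l = [] := List.perm_nil.mp (by simpa using hperm)
      subst this
      simp only [List.range'_zero]
      exact Relation.ReflTransGen.refl
    | K + 1 =>
      set n' := m + K with hn'
      have hmem : n' ∈ l := hperm.mem_iff.mpr (by rw [List.mem_range'_1]; omega)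
      obtain ⟨A, B, rfl⟩ := List.append_of_mem hmem
      have hlenl : (A ++ n' :: B).length = K + 1 := by
        rw [hperm.length_eq, List.length_range']
      have hab : A.length + B.length = K := by simp at hlenl; omega
      have hnd : (A ++ n' :: B).Nodup := hperm.nodup_iff.mpr List.nodup_range'
      have hdisj := List.disjoint_of_nodup_append hnd
      -- every element of A is less than every element of B
      have hmemrange : ∀ x ∈ A ++ n' :: B, m ≤ x ∧ x < m + (K + 1) := by
        intro x hx
        have := hperm.subset hx
        rwa [List.mem_range'_1] at this
      have hAB : ∀ x ∈ A, ∀ y ∈ B, x < y := by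
        intro x hx y hy
        obtain ⟨⟨p, hp⟩, rfl⟩ := List.mem_iff_get.mp hx
        obtain ⟨⟨q, hq⟩, rfl⟩ := List.mem_iff_get.mp hy
        simp only [List.get_eq_getElem]
        have hxl : A[p] ∈ A ++ n' :: B := List.mem_append_left _ (by
          exact List.getElem_mem hp)
        have hyl : B[q] ∈ A ++ n' :: B := List.mem_append_right _ (by
          exact List.mem_cons_of_mem _ (List.getElem_mem hq))
        have hxne : A[p] ≠ n' := by
          intro heq
          exact (hdisj (List.getElem_mem hp)) (heq ▸ List.mem_cons_self)
        have hyne : A[p] ≠ B[q] := by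
          intro heq
          exact (hdisj (List.getElem_mem hp)) (heq ▸ List.mem_cons_of_mem _
            (List.getElem_mem hq))
        have hxlt : A[p] < n' := by
          have := (hmemrange _ hxl).2
          omega
        -- use avoidance with indices p, A.length, A.length + 1 + q
        by_contra hcon
        push_neg at hcon
        apply havoid
        have hip : p < (A ++ n' :: B).length := by simp; omega
        have hja : A.length < (A ++ n' :: B).length := by simp
        have hkq : A.length + 1 + q < (A ++ n' :: B).length := by simp; omega
        refine ⟨⟨p, hip⟩, ⟨A.length, hja⟩, ⟨A.length + 1 + q, hkq⟩, ?_, ?_, ?_, ?_⟩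
        · simp only [Fin.mk_lt_mk]; omega
        · simp only [Fin.mk_lt_mk]; omega
        · simp only [List.get_eq_getElem]
          rw [List.getElem_append_left hp, List.getElem_append_right (by omega)]
          have h1 : A.length + 1 + q - A.length = q + 1 := by omega
          simp only [h1, List.getElem_cons_succ]
          omega
        · simp only [List.get_eq_getElem]
          rw [List.getElem_append_left hp, List.getElem_append_right (le_refl _)]
          simpa using hxlt
      -- A ++ B is a permutation of range' m K
      have hABperm : (A ++ B).Perm (List.range' m K) := by
        have h1 : (A ++ n' :: B).Perm (n' :: (A ++ B)) := List.perm_middle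
        have h2 : (List.range' m (K + 1)).Perm (n' :: List.range' m K) := by
          rw [List.range'_1_concat]
          exact List.perm_append_comm
        have := (h1.symm.trans hperm).trans h2
        exact this.cons_inv
      have hmemK : ∀ x ∈ A ++ B, m ≤ x ∧ x < m + K := by
        intro x hx
        have := hABperm.subset hx
        rwa [List.mem_range'_1] at this
      have hndAB : (A ++ B).Nodup := hABperm.nodup_iff.mpr List.nodup_range'
      -- A is a permutation of range' m A.length
      have hsubA : List.range' m A.length ⊆ A := by
        intro z hz
        rw [List.mem_range'_1] at hz
        have hzK : z ∈ A ++ B := hABperm.mem_iff.mpr (by rw [List.mem_range'_1]; omega)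
        rcases List.mem_append.mp hzK with hzA | hzB
        · exact hzA
        · exfalso
          have hsub : A ⊆ List.range' m (z - m) := by
            intro w hw
            rw [List.mem_range'_1]
            have h1 := (hmemK w (List.mem_append_left _ hw)).1
            have h2 := hAB w hw z hzB
            omega
          have := (List.subperm_of_subset hndAB.of_append_left hsub).length_le
          rw [List.length_range'] at this
          omega
      have hA : A.Perm (List.range' m A.length) := by
        refine ((List.subperm_of_subset List.nodup_range' hsubA).perm_of_length_le
          (by rw [List.length_range'])).symm
      -- B is a permutation of range' (m + A.length) B.length
      have hB : B.Perm (List.range' (m + A.length) B.length) := by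
        have hsplit : List.range' m K
            = List.range' m A.length ++ List.range' (m + A.length) B.length := by
          rw [List.range'_append_1]
          congr 1
          omega
        have h1 : (A ++ B).Perm (List.range' m A.length ++ List.range' (m + A.length)
            B.length) := by rw [← hsplit]; exact hABperm
        have h2 : (List.range' m A.length ++ B).Perm
            (List.range' m A.length ++ List.range' (m + A.length) B.length) :=
          ((hA.symm.append (List.Perm.refl B)).trans h1)
        exact (List.perm_append_left_iff _).mp h2
      -- recursive runs
      have havA : ¬ Contains231L A := avoid_of_append_left havoid
      have havB : ¬ Contains231L B := avoid_of_append_right havoid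
      have rA := ih A.length (by omega) m A hA havA
      have rB := ih B.length (by omega) (m + A.length) B hB havB
      -- assemble the run
      have step1 : Relation.ReflTransGen StackStep ⟨[], [], A ++ n' :: B⟩
          ⟨List.range' m A.length, [], n' :: B⟩ := by
        have := run_frame [] [] (n' :: B) rA
        simpa using this
      have step2 : Relation.ReflTransGen StackStep ⟨List.range' m A.length, [], n' :: B⟩
          ⟨List.range' m A.length, [n'], B⟩ :=
        Relation.ReflTransGen.single (StackStep.push _ _ _ _)
      have step3 : Relation.ReflTransGen StackStep ⟨List.range' m A.length, [n'], B⟩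
          ⟨List.range' m A.length ++ List.range' (m + A.length) B.length, [n'], []⟩ := by
        have := run_frame (List.range' m A.length) [n'] [] rB
        simpa using this
      have step4 : Relation.ReflTransGen StackStep
          ⟨List.range' m A.length ++ List.range' (m + A.length) B.length, [n'], []⟩
          ⟨(List.range' m A.length ++ List.range' (m + A.length) B.length) ++ [n'], [], []⟩ :=
        Relation.ReflTransGen.single (StackStep.pop _ _ _ _)
      have hfinal : (List.range' m A.length ++ List.range' (m + A.length) B.length) ++ [n']
          = List.range' m (K + 1) := by
        rw [List.range'_append_1]
        have hba : B.length + A.length = K := by omega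
        rw [hab, List.range'_1_concat]
      rw [hfinal] at step4
      exact ((step1.trans step2).trans step3).trans step4

/-- A permutation of length `n` is sortable on a single stack iff it avoids 231. -/
theorem stackSortable_iff_avoids231 (n : ℕ) (l : List ℕ) (hl : l.Perm (List.range' 1 n)) :
    StackSortable l ↔ ¬ Contains231L l := by
  have hlen : l.length = n := by rw [hl.length_eq, List.length_range']
  constructor
  · intro hsort hcont
    obtain ⟨i, j, k, hij, hjk, h1, h2⟩ := hcont
    have hrun : Relation.ReflTransGen StackStep ⟨[], [], l⟩
        ⟨[] ++ List.range' 1 (([] : List ℕ).length + l.length), [], []⟩ := by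
      simpa [StackSortable] using hsort
    have hcs := run_to_canSort (2 * l.length + 0) 1 [] [] l (by simp) hrun
    simp only [List.get_eq_getElem] at h1 h2
    exact not_canSort_of_bad hcs l[(i : ℕ)] l[(j : ℕ)] l[(k : ℕ)] h1 h2
      (Or.inl (sublist_three hij hjk k.isLt i.isLt j.isLt))
  · intro hav
    have := build l.length 1 l (by rwa [hlen]) hav
    exact this
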